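/- arXiv:2301.08666 — 8 statements merged into one kernel-verified Lean document; each statement's English description precedes it below -/
import Mathlib

section
/- If a weak order ≽ on A^N (N finite with at least 2 agents) satisfies symmetry, separability, and sufficientarian judgment, then the induced relation ≥* on A (defined by a ≥* b iff for some c, the allocation with a in coordinate i and c elsewhere is ≽ the allocation with b in coordinate i and c elsewhere) has at most two equivalence classes. -/
open Function

section Defs

variable {N A : Type*}

/-- Weak order: complete and transitive. -/
def WeakOrderRel (R : (N → A) → (N → A) → Prop) : Prop :=
  (∀ x y, R x y ∨ R y x) ∧ ∀ x y z, R x y → R y z → R x z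

/-- The strict part of a relation. -/
def StrictRel (R : (N → A) → (N → A) → Prop) (x y : N → A) : Prop :=
  R x y ∧ ¬ R y x

/-- Symmetry: any allocation is socially indifferent to any permutation of it. -/
def SymmetryAx (R : (N → A) → (N → A) → Prop) : Prop :=
  ∀ (σ : Equiv.Perm N) (x : N → A), R x (x ∘ σ) ∧ R (x ∘ σ) x

open Classical in
/-- `splice M x y` agrees with `x` on `M` and with `y` off `M`. -/
noncomputable def splice (M : Set N) (x y : N → A) : N → A :=
  fun i => if i ∈ M then x i else y i

/-- Separability. -/
def SeparabilityAx (R : (N → A) → (N → A) → Prop) : Prop :=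
  ∀ (M : Set N) (x y x' y' : N → A),
    (R (splice M x y) (splice M x' y) ↔ R (splice M x y') (splice M x' y'))

open Classical in
/-- `alloc i a b` gives `a` to agent `i` and `b` to everyone else. -/
noncomputable def alloc (i : N) (a b : A) : N → A :=
  Function.update (fun _ => b) i a

open Classical in
/-- `alloc2 i j a c b` gives `a` to `i`, `c` to `j`, and `b` to the rest. -/
noncomputable def alloc2 (i j : N) (a c b : A) : N → A :=
  Function.update (alloc i a b) j c

/-- Sufficientarian judgment. -/
def SuffJudgment (R : (N → A) → (N → A) → Prop) : Prop :=
  ∀ (a b c : A) (i j : N), i ≠ j →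
    StrictRel R (fun _ => b) (alloc i a b) →
    R (alloc i a b) (alloc2 i j a c b)

/-- Weak sufficientarian judgment. -/
def WeakSuffJudgment (R : (N → A) → (N → A) → Prop) : Prop :=
  ∀ (a b c : A) (i j : N), i ≠ j →
    StrictRel R (fun _ => b) (alloc i a b) →
    StrictRel R (fun _ => b) (alloc2 i j a c b)

/-- Sufficientarianism: comparisons count agents whose consumption is in a sufficient set. -/
def IsSufficientarian [Fintype N] (R : (N → A) → (N → A) → Prop) : Prop :=
  ∃ S : Set A, ∀ x y : N → A,
    R x y ↔ Nat.card {i : N // x i ∈ S} ≥ Nat.card {i : N // y i ∈ S}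

end Defs

/-- The induced relation on `A`: `a ≥* b` iff giving `a` to some agent `i`
(everyone else consuming `c`) is socially at least as good as giving `b` to `i`. -/
def geStar {N A : Type*} (R : (N → A) → (N → A) → Prop) (a b : A) : Prop :=
  ∃ (i : N) (c : A), R (alloc i a c) (alloc i b c)

/-- under weak order, symmetry, separability and sufficientarian judgment,
the induced relation `≥*` has at most two equivalence classes: there is no strictly
decreasing chain of length three. -/
theorem stmt0 {N A : Type*} [Fintype N] (hN : 2 ≤ Fintype.card N) [Nonempty A]
    (R : (N → A) → (N → A) → Prop)
    (hwo : WeakOrderRel R) (hsym : SymmetryAx R) (hsep : SeparabilityAx R)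
    (hsj : SuffJudgment R) :
    ¬ ∃ a b c : A,
      (geStar R a b ∧ ¬ geStar R b a) ∧ (geStar R b c ∧ ¬ geStar R c b) := by
  
  classical
  rintro ⟨a, b, c, ⟨_, hnba⟩, ⟨_, hncb⟩⟩
  obtain ⟨i, j, hij⟩ : ∃ i j : N, i ≠ j :=
    Fintype.exists_pair_of_one_lt_card (by omega)
  obtain ⟨hcomp, htrans⟩ := hwo
  -- basic pointwise equalities
  have e1 : alloc i b b = fun _ : N => b := by
    funext k; by_cases hk : k = i <;> simp [alloc, Function.update_apply, hk]
  have e2 : (alloc2 i j c a b) ∘ (Equiv.swap i j) = alloc2 i j a c b := by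
    funext k
    by_cases hk : k = i
    · subst hk
      simp [alloc2, alloc, Function.update_apply, Equiv.swap_apply_left, hij, hij.symm]
    · by_cases hk2 : k = j
      · subst hk2
        simp [alloc2, alloc, Function.update_apply, Equiv.swap_apply_right, hij, hij.symm]
      · simp [alloc2, alloc, Function.update_apply, Equiv.swap_apply_of_ne_of_ne hk hk2,
          hk, hk2]
  have e7 : (alloc j c b) ∘ (Equiv.swap i j) = alloc i c b := by
    funext k
    by_cases hk : k = i
    · subst hk
      simp [alloc, Function.update_apply, Equiv.swap_apply_left, hij.symm]
    · by_cases hk2 : k = j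
      · subst hk2
        simp [alloc, Function.update_apply, Equiv.swap_apply_right, hij, hij.symm]
      · simp [alloc, Function.update_apply, Equiv.swap_apply_of_ne_of_ne hk hk2, hk, hk2]
  have e3 : splice {i} (fun _ : N => a) (alloc j c b) = alloc2 i j a c b := by
    funext k
    by_cases hk : k = i
    · subst hk; simp [splice, alloc2, alloc, Function.update_apply, hij, hij.symm]
    · by_cases hk2 : k = j
      · subst hk2; simp [splice, alloc2, alloc, Function.update_apply, hij, hij.symm]
      · simp [splice, alloc2, alloc, Function.update_apply, hk, hk2]
  have e4 : splice {i} (fun _ : N => b) (alloc j c b) = alloc j c b := by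
    funext k
    by_cases hk : k = i
    · subst hk; simp [splice, alloc, Function.update_apply, hij, hij.symm]
    · simp [splice, alloc, Function.update_apply, hk]
  have e5 : splice {i} (fun _ : N => a) (fun _ : N => b) = alloc i a b := by
    funext k; by_cases hk : k = i <;> simp [splice, alloc, Function.update_apply, hk]
  have e6 : splice {i} (fun _ : N => b) (fun _ : N => b) = alloc i b b := by
    funext k; by_cases hk : k = i <;> simp [splice, alloc, Function.update_apply, hk]
  -- from ¬ geStar b a: alloc i a b ≻ const b
  have hab1 : R (alloc i a b) (fun _ => b) := by
    rw [← e1]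
    rcases hcomp (alloc i a b) (alloc i b b) with h | h
    · exact h
    · exact absurd ⟨i, b, h⟩ hnba
  have hab2 : ¬ R (fun _ => b) (alloc i a b) := by
    rw [← e1]; exact fun h => hnba ⟨i, b, h⟩
  -- from ¬ geStar c b: const b ≻ alloc i c b
  have hcb2 : ¬ R (alloc i c b) (fun _ => b) := by
    rw [← e1]; exact fun h => hncb ⟨i, b, h⟩
  have hcb1 : R (fun _ => b) (alloc i c b) := by
    rw [← e1]
    rcases hcomp (alloc i b b) (alloc i c b) with h | h
    · exact h
    · rw [e1] at h; exact absurd h hcb2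
  -- sufficientarian judgment: alloc i c b ≽ alloc2 i j c a b
  have hsj' : R (alloc i c b) (alloc2 i j c a b) :=
    hsj c b a i j hij ⟨hcb1, hcb2⟩
  -- symmetry: alloc2 i j c a b ~ alloc2 i j a c b
  have hswap : R (alloc2 i j c a b) (alloc2 i j a c b) := by
    have := (hsym (Equiv.swap i j) (alloc2 i j c a b)).1
    rwa [e2] at this
  have step1 : R (alloc i c b) (alloc2 i j a c b) :=
    htrans _ _ _ hsj' hswap
  -- separability: alloc j c b ≽ alloc2 i j a c b ↔ const b ≽ alloc i a b
  have hsep' := hsep {i} (fun _ : N => b) (alloc j c b) (fun _ : N => a) (fun _ : N => b)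
  rw [e3, e4, e5, e6, e1] at hsep'
  have step2 : ¬ R (alloc j c b) (alloc2 i j a c b) := fun h => hab2 (hsep'.1 h)
  -- symmetry: alloc j c b ~ alloc i c b
  have hswap2 : R (alloc j c b) (alloc i c b) := by
    have := (hsym (Equiv.swap i j) (alloc j c b)).1
    rwa [e7] at this
  exact step2 (htrans _ _ _ hswap2 step1)
end

section
/- A binary relation ≽ on A^N is sufficientarian (i.e., there exists S ⊆ A such that x ≽ y iff |{i : x_i ∈ S}| ≥ |{i : y_i ∈ S}|) if and only if it satisfies weak order, symmetry, separability, and sufficientarian judgment. -/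
open Function

section Cnt

variable {N A : Type*} [Fintype N]
open Finset

open Classical in
noncomputable def cntS (S : Set A) (x : N → A) : ℕ :=
  (Finset.univ.filter (fun i => x i ∈ S)).card

open Classical in
lemma natCard_eq_cntS (S : Set A) (x : N → A) :
    Nat.card {i : N // x i ∈ S} = cntS S x := by
  rw [Nat.card_eq_fintype_card, Fintype.card_subtype, cntS]

open Classical in
lemma cntS_update (S : Set A) (z : N → A) (i : N) (a : A) :
    cntS S (Function.update z i a)
      = ((univ.erase i).filter (fun j => z j ∈ S)).card + (if a ∈ S then 1 else 0) := by
  classical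
  unfold cntS
  have huniv : (univ : Finset N) = insert i (univ.erase i) :=
    (Finset.insert_erase (mem_univ i)).symm
  conv_lhs => rw [huniv, filter_insert]
  have h2 : ((univ.erase i).filter (fun j => Function.update z i a j ∈ S))
      = ((univ.erase i).filter (fun j => z j ∈ S)) := by
    apply filter_congr
    intro j hj
    rw [Function.update_of_ne (mem_erase.mp hj).1]
  have hnot : i ∉ (univ.erase i).filter (fun j => Function.update z i a j ∈ S) := by
    intro h
    exact (mem_erase.mp (mem_filter.mp h).1).1 rfl
  rw [Function.update_self]
  by_cases ha : a ∈ S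
  · rw [if_pos ha, if_pos ha, card_insert_of_notMem hnot, h2]
  · rw [if_neg ha, if_neg ha, h2, add_zero]

open Classical in
lemma cntS_splice (S : Set A) (M : Set N) (x y : N → A) :
    cntS S (splice M x y)
      = (univ.filter (fun i => i ∈ M ∧ x i ∈ S)).card
        + (univ.filter (fun i => i ∉ M ∧ y i ∈ S)).card := by
  classical
  unfold cntS
  rw [← card_union_of_disjoint]
  · congr 1
    ext i
    by_cases h : i ∈ M <;> rw [Finset.mem_filter] <;> simp [splice, h]
  · rw [Finset.disjoint_left]
    intro i h1 h2
    exact (mem_filter.mp h2).2.1 (mem_filter.mp h1).2.1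

lemma cntS_comp_perm (S : Set A) (x : N → A) (σ : Equiv.Perm N) :
    cntS S (x ∘ σ) = cntS S x := by
  rw [← natCard_eq_cntS, ← natCard_eq_cntS]
  exact Nat.card_congr (σ.subtypeEquiv fun i => Iff.rfl)

end Cnt

section Fwd
open Finset
variable {N A : Type*} [Fintype N]

lemma forward_dir (hN : 2 ≤ Fintype.card N) (R : (N → A) → (N → A) → Prop)
    (h : IsSufficientarian R) :
    WeakOrderRel R ∧ SymmetryAx R ∧ SeparabilityAx R ∧ SuffJudgment R := by
  classical
  obtain ⟨S, hS⟩ := h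
  have hS' : ∀ x y, R x y ↔ cntS S x ≥ cntS S y := by
    intro x y
    rw [hS, natCard_eq_cntS, natCard_eq_cntS]
  refine ⟨⟨?_, ?_⟩, ?_, ?_, ?_⟩
  · intro x y
    rw [hS', hS']
    omega
  · intro x y z hxy hyz
    rw [hS'] at *
    omega
  · intro σ x
    constructor <;> rw [hS', cntS_comp_perm]
  · intro M x y x' y'
    rw [hS', hS', cntS_splice, cntS_splice, cntS_splice, cntS_splice]
    omega
  · intro a b c i j hij hstrict
    have hb : (fun _ => b : N → A) = Function.update (fun _ => b) i b :=
      (Function.update_eq_self i _).symm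
    have h1 : cntS S (fun _ => b : N → A)
        = ((univ.erase i).filter (fun k => (fun _ => b : N → A) k ∈ S)).card
          + (if b ∈ S then 1 else 0) := by
      conv_lhs => rw [hb]
      rw [cntS_update]
    have h2 : cntS S (alloc i a b)
        = ((univ.erase i).filter (fun k => (fun _ => b : N → A) k ∈ S)).card
          + (if a ∈ S then 1 else 0) := cntS_update S _ i a
    obtain ⟨hw, hns⟩ := hstrict
    rw [hS'] at hw hns
    rw [h1, h2] at hw hns
    have hbS : b ∈ S := by
      by_contra hbS
      rw [if_neg hbS] at hns
      exact hns (by split <;> omega)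
    have haS : a ∉ S := by
      intro haS
      rw [if_pos haS, if_pos hbS] at hns
      omega
    -- now the goal
    have e1 : alloc i a b = Function.update (alloc i a b) j b := by
      have hj : alloc i a b j = b := by
        simp [alloc, Function.update_of_ne (Ne.symm hij)]
      conv_lhs => rw [← Function.update_eq_self j (alloc i a b)]
      rw [hj]
    rw [hS']
    have h3 : cntS S (alloc i a b)
        = ((univ.erase j).filter (fun k => alloc i a b k ∈ S)).card
          + (if b ∈ S then 1 else 0) := by
      conv_lhs => rw [e1]
      rw [cntS_update]
    have h4 : cntS S (alloc2 i j a c b)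
        = ((univ.erase j).filter (fun k => alloc i a b k ∈ S)).card
          + (if c ∈ S then 1 else 0) := cntS_update S _ j c
    rw [h3, h4]
    simp [hbS]
    split <;> omega

end Fwd

section Bwd
open Finset
variable {N A : Type*} [Fintype N]
variable {R : (N → A) → (N → A) → Prop}

/-- The induced relation on `A`: compare giving `a` vs `b` to agent `i₀`, rest `d`. -/
def Drel (R : (N → A) → (N → A) → Prop) (i₀ : N) (d : A) (a b : A) : Prop :=
  R (alloc i₀ a d) (alloc i₀ b d)

lemma perm_iff (hW : WeakOrderRel R) (hSym : SymmetryAx R) (σ : Equiv.Perm N) (x y : N → A) :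
    R x y ↔ R (x ∘ σ) (y ∘ σ) := by
  obtain ⟨hC, hT⟩ := hW
  constructor
  · intro h
    exact hT _ _ _ ((hSym σ x).2) (hT _ _ _ h ((hSym σ y).1))
  · intro h
    exact hT _ _ _ ((hSym σ x).1) (hT _ _ _ h ((hSym σ y).2))

open Classical in
lemma alloc_comp_swap (i i' : N) (a d : A) :
    (alloc i a d) ∘ (Equiv.swap i i') = alloc i' a d := by
  classical
  funext j
  simp only [Function.comp_apply, alloc, Function.update_apply, Equiv.swap_apply_def]
  split_ifs <;> simp_all

lemma coordD (hW : WeakOrderRel R) (hSym : SymmetryAx R) (hSep : SeparabilityAx R)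
    (i₀ : N) (d : A) {i : N} {x y : N → A} (h : ∀ j, j ≠ i → x j = y j) :
    R x y ↔ Drel R i₀ d (x i) (y i) := by
  classical
  have e1 : splice {i} x y = x := by
    funext j
    by_cases hj : j ∈ ({i} : Set N)
    · simp [splice, hj]
    · simp only [splice, if_neg hj]
      exact (h j (by simpa using hj)).symm
  have e2 : splice {i} y y = y := by
    funext j; by_cases hj : j ∈ ({i} : Set N) <;> simp [splice, hj]
  have e3 : splice {i} x (fun _ => d) = alloc i (x i) d := by
    funext j
    by_cases hj : j = i
    · subst hj; simp [splice, alloc]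
    · simp [splice, alloc, hj, Function.update_of_ne hj]
  have e4 : splice {i} y (fun _ => d) = alloc i (y i) d := by
    funext j
    by_cases hj : j = i
    · subst hj; simp [splice, alloc]
    · simp [splice, alloc, hj, Function.update_of_ne hj]
  have step1 : R x y ↔ R (alloc i (x i) d) (alloc i (y i) d) := by
    have := hSep {i} x y y (fun _ => d)
    rw [e1, e2, e3, e4] at this
    exact this
  rw [step1, perm_iff hW hSym (Equiv.swap i i₀), alloc_comp_swap, alloc_comp_swap]
  exact Iff.rfl

lemma Drel_max (hN : 2 ≤ Fintype.card N) (hW : WeakOrderRel R) (hSym : SymmetryAx R)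
    (hSep : SeparabilityAx R) (hSJ : SuffJudgment R)
    (i₀ : N) (d : A) {a b : A} (h1 : Drel R i₀ d b a) (h2 : ¬ Drel R i₀ d a b) (c : A) :
    Drel R i₀ d b c := by
  classical
  obtain ⟨i, j, hij⟩ := Fintype.exists_pair_of_one_lt_card (by omega : 1 < Fintype.card N)
  have hoff : ∀ k, k ≠ i → (fun _ => b : N → A) k = alloc i a b k := by
    intro k hk; simp [alloc, Function.update_of_ne hk]
  have hoff' : ∀ k, k ≠ i → alloc i a b k = (fun _ => b : N → A) k := by
    intro k hk; simp [alloc, Function.update_of_ne hk]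
  have c1 := coordD hW hSym hSep i₀ d (i := i) hoff
  have c2 := coordD hW hSym hSep i₀ d (i := i) hoff'
  simp only [alloc, Function.update_self] at c1 c2
  have hstr : StrictRel R (fun _ => b) (alloc i a b) :=
    ⟨c1.mpr h1, fun hr => h2 (c2.mp hr)⟩
  have hr := hSJ a b c i j hij hstr
  have hoff2 : ∀ k, k ≠ j → alloc i a b k = alloc2 i j a c b k := by
    intro k hk; simp [alloc2, Function.update_of_ne hk]
  have c3 := coordD hW hSym hSep i₀ d (i := j) hoff2
  have ej1 : alloc i a b j = b := by simp [alloc, Function.update_of_ne (Ne.symm hij)]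
  have ej2 : alloc2 i j a c b j = c := Function.update_self _ _ _
  rw [ej1, ej2] at c3
  exact c3.mp hr

open Classical in
/-- `mix T x y` is `y` on `T` and `x` off `T`. -/
noncomputable def mix (T : Finset N) (x y : N → A) : N → A :=
  fun k => if k ∈ T then y k else x k

lemma indiff_coord (hW : WeakOrderRel R) (hSym : SymmetryAx R) (hSep : SeparabilityAx R)
    (i₀ : N) (d : A) (x y : N → A)
    (h : ∀ i, Drel R i₀ d (x i) (y i) ∧ Drel R i₀ d (y i) (x i)) :
    R x y ∧ R y x := by
  classical
  obtain ⟨hC, hT⟩ := hW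
  have hrefl : ∀ z : N → A, R z z := fun z => (hC z z).elim id id
  have H : ∀ T : Finset N, R x (mix T x y) ∧ R (mix T x y) x := by
    intro T
    induction T using Finset.induction_on with
    | empty =>
      have e0 : mix (∅ : Finset N) x y = x := by funext k; simp [mix]
      rw [e0]; exact ⟨hrefl x, hrefl x⟩
    | @insert i T hi IH =>
      have hoff : ∀ k, k ≠ i → mix (insert i T) x y k = mix T x y k := by
        intro k hk; simp [mix, Finset.mem_insert, hk]
      have hoff' : ∀ k, k ≠ i → mix T x y k = mix (insert i T) x y k := by
        intro k hk; simp [mix, Finset.mem_insert, hk]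
      have c1 := coordD ⟨hC, hT⟩ hSym hSep i₀ d (i := i) hoff
      have c2 := coordD ⟨hC, hT⟩ hSym hSep i₀ d (i := i) hoff'
      have v1 : mix (insert i T) x y i = y i := by simp [mix]
      have v2 : mix T x y i = x i := by simp [mix, hi]
      rw [v1, v2] at c1 c2
      exact ⟨hT _ _ _ IH.1 (c2.mpr (h i).1), hT _ _ _ (c1.mpr (h i).2) IH.2⟩
  have hu := H Finset.univ
  have eu : mix (Finset.univ : Finset N) x y = y := by funext k; simp [mix]
  rw [eu] at hu
  exact hu

end Bwd
/-- a binary relation on `A^N` is sufficientarian iff it satisfies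
weak order, symmetry, separability, and sufficientarian judgment. -/
theorem stmt1 {N A : Type*} [Fintype N] (hN : 2 ≤ Fintype.card N) [Nonempty A]
    (R : (N → A) → (N → A) → Prop) :
    IsSufficientarian R ↔
      (WeakOrderRel R ∧ SymmetryAx R ∧ SeparabilityAx R ∧ SuffJudgment R) := by
  classical
  constructor
  · exact forward_dir hN R
  · rintro ⟨hW, hSym, hSep, hSJ⟩
    haveI hNne : Nonempty N := Fintype.card_pos_iff.mp (by omega)
    obtain ⟨hC, hT⟩ := id hW
    have hrefl : ∀ z : N → A, R z z := fun z => (hC z z).elim id id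
    set i₀ : N := Classical.arbitrary N with hi₀
    set d : A := Classical.arbitrary A with hd
    set D : A → A → Prop := Drel R i₀ d with hDdef
    have hDrefl : ∀ a, D a a := fun a => hrefl _
    have hDtot : ∀ a b : A, D a b ∨ D b a := fun a b => hC _ _
    have hDtrans : ∀ a b c : A, D a b → D b c → D a c := fun a b c => hT _ _ _
    have hcard : ∀ (S : Set A) (x : N → A), Nat.card {i : N // x i ∈ S}
        = (Finset.univ.filter (fun i => x i ∈ S)).card := by
      intro S x
      rw [natCard_eq_cntS]
      rfl
    by_cases htriv : ∀ a b : A, D a b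
    · refine ⟨∅, fun x y => ?_⟩
      have hRxy : R x y := (indiff_coord hW hSym hSep i₀ d x y
        (fun i => ⟨htriv _ _, htriv _ _⟩)).1
      haveI : ∀ z : N → A, IsEmpty {i : N // z i ∈ (∅ : Set A)} := fun z => ⟨fun p => p.2⟩
      simp [Nat.card_of_isEmpty, hRxy]
    · push_neg at htriv
      obtain ⟨b₁, a₁, hnd⟩ := htriv
      have hd1 : D a₁ b₁ := (hDtot b₁ a₁).resolve_left hnd
      set S : Set A := {a | D a b₁ ∧ ¬ D b₁ a} with hSdef
      have ha₁ : a₁ ∈ S := ⟨hd1, hnd⟩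
      have hb₁ : b₁ ∉ S := fun h => h.2 (hDrefl b₁)
      have hmax : ∀ s ∈ S, ∀ c, D s c := fun s hs c =>
        Drel_max hN hW hSym hSep hSJ i₀ d hs.1 hs.2 c
      have hbad : ∀ a, a ∉ S → D a b₁ ∧ D b₁ a := by
        intro a ha
        have h2 : D b₁ a := by
          by_contra h
          exact ha ⟨(hDtot a b₁).resolve_right h, h⟩
        refine ⟨?_, h2⟩
        by_contra h
        exact hnd (Drel_max hN hW hSym hSep hSJ i₀ d h2 h a₁)
      have hgood : ∀ a ∈ S, D a a₁ ∧ D a₁ a := fun a ha =>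
        ⟨hmax a ha a₁, hmax a₁ ha₁ a⟩
      set std : Finset N → (N → A) := fun T => mix T (fun _ => b₁) (fun _ => a₁) with hstd
      have std_apply : ∀ (T : Finset N) (i : N), std T i = if i ∈ T then a₁ else b₁ := by
        intro T i; by_cases h : i ∈ T <;> simp [hstd, mix, h]
      have std_step : ∀ (T : Finset N) (i : N), i ∈ T →
          R (std T) (std (T.erase i)) ∧ ¬ R (std (T.erase i)) (std T) := by
        intro T i hi
        have hoff : ∀ k, k ≠ i → std T k = std (T.erase i) k := by
          intro k hk
          rw [std_apply, std_apply]
          simp [Finset.mem_erase, hk]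
        have hoff' : ∀ k, k ≠ i → std (T.erase i) k = std T k := fun k hk => (hoff k hk).symm
        have c1 := coordD hW hSym hSep i₀ d (i := i) hoff
        have c2 := coordD hW hSym hSep i₀ d (i := i) hoff'
        have v1 : std T i = a₁ := by rw [std_apply, if_pos hi]
        have v2 : std (T.erase i) i = b₁ := by
          rw [std_apply, if_neg (by simp)]
        rw [v1, v2] at c1 c2
        exact ⟨c1.mpr hd1, fun h => hnd (c2.mp h)⟩
      have std_weak : ∀ (k : ℕ) (T T' : Finset N), T.card ≤ k → T' ⊆ T →
          R (std T) (std T') := by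
        intro k
        induction k with
        | zero =>
          intro T T' hc hsub
          have hT0 : T = ∅ := Finset.card_eq_zero.mp (Nat.le_zero.mp hc)
          subst hT0
          have hT0' : T' = ∅ := Finset.subset_empty.mp hsub
          subst hT0'
          exact hrefl _
        | succ k IH =>
          intro T T' hc hsub
          by_cases he : T' = T
          · subst he; exact hrefl _
          · obtain ⟨i, hiT, hiT'⟩ := Finset.exists_of_ssubset (lt_of_le_of_ne hsub he)
            have h1 := (std_step T i hiT).1
            have h2 : R (std (T.erase i)) (std T') := by
              apply IH
              · rw [Finset.card_erase_of_mem hiT]; omega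
              · exact Finset.subset_erase.mpr ⟨hsub, hiT'⟩
            exact hT _ _ _ h1 h2
      have std_strict : ∀ (T T' : Finset N), T' ⊂ T → ¬ R (std T') (std T) := by
        intro T T' hss h
        obtain ⟨i, hiT, hiT'⟩ := Finset.exists_of_ssubset hss
        have h2 : R (std (T.erase i)) (std T') :=
          std_weak (T.erase i).card _ _ le_rfl (Finset.subset_erase.mpr ⟨hss.subset, hiT'⟩)
        exact (std_step T i hiT).2 (hT _ _ _ h2 h)
      have std_indiff : ∀ (T T' : Finset N), T.card = T'.card →
          R (std T) (std T') ∧ R (std T') (std T) := by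
        intro T T' hcc
        have e : {x : N // x ∈ T} ≃ {x : N // x ∈ T'} := Finset.equivOfCardEq hcc
        have hcompl : Fintype.card {x : N // ¬ x ∈ T} = Fintype.card {x : N // ¬ x ∈ T'} := by
          rw [Fintype.card_subtype_compl, Fintype.card_subtype_compl,
            Fintype.card_coe, Fintype.card_coe, hcc]
        have f : {x : N // ¬ x ∈ T} ≃ {x : N // ¬ x ∈ T'} := Fintype.equivOfCardEq hcompl
        set σ : Equiv.Perm N := Equiv.subtypeCongr e f with hσ
        have hσ_mem : ∀ i, i ∈ T → (σ i) ∈ T' := by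
          intro i hi
          have hv : σ i = ↑(e ⟨i, hi⟩) := by
            simp [hσ, Equiv.subtypeCongr, Equiv.sumCompl_symm_apply_of_pos hi]
          rw [hv]; exact (e ⟨i, hi⟩).2
        have hσ_not : ∀ i, i ∉ T → (σ i) ∉ T' := by
          intro i hi
          have hv : σ i = ↑(f ⟨i, hi⟩) := by
            simp [hσ, Equiv.subtypeCongr, Equiv.sumCompl_symm_apply_of_neg hi]
          rw [hv]; exact (f ⟨i, hi⟩).2
        have heq : std T = (std T') ∘ σ := by
          funext i
          rw [Function.comp_apply, std_apply, std_apply]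
          by_cases hi : i ∈ T
          · rw [if_pos hi, if_pos (hσ_mem i hi)]
          · rw [if_neg hi, if_neg (hσ_not i hi)]
        have hsy := hSym σ (std T')
        rw [← heq] at hsy
        exact ⟨hsy.2, hsy.1⟩
      have std_cmp : ∀ T T' : Finset N, R (std T) (std T') ↔ T'.card ≤ T.card := by
        intro T T'
        constructor
        · intro h
          by_contra hcc
          push_neg at hcc
          obtain ⟨T'', hsub, hc⟩ := Finset.exists_subset_card_eq (le_of_lt hcc)
          have hss : T'' ⊂ T' := lt_of_le_of_ne hsub (fun hEq => by rw [hEq] at hc; omega)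
          have hind := std_indiff T'' T hc
          exact std_strict T' T'' hss (hT _ _ _ hind.1 h)
        · intro h
          obtain ⟨T'', hsub, hc⟩ := Finset.exists_subset_card_eq h
          have h1 := std_weak T.card T T'' le_rfl hsub
          have h2 := (std_indiff T'' T' hc).1
          exact hT _ _ _ h1 h2
      refine ⟨S, fun x y => ?_⟩
      have reduce : ∀ z : N → A, R z (std (Finset.univ.filter (fun i => z i ∈ S)))
          ∧ R (std (Finset.univ.filter (fun i => z i ∈ S))) z := by
        intro z
        apply indiff_coord hW hSym hSep i₀ d
        intro i
        by_cases hi : z i ∈ S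
        · have hv : std (Finset.univ.filter (fun j => z j ∈ S)) i = a₁ := by
            rw [std_apply, if_pos (by simp [hi])]
          rw [hv]
          exact ⟨(hgood _ hi).1, (hgood _ hi).2⟩
        · have hv : std (Finset.univ.filter (fun j => z j ∈ S)) i = b₁ := by
            rw [std_apply, if_neg (by simp [hi])]
          rw [hv]
          exact ⟨(hbad _ hi).1, (hbad _ hi).2⟩
      have hx := reduce x
      have hy := reduce y
      have key : R x y ↔ R (std (Finset.univ.filter (fun i => x i ∈ S)))
          (std (Finset.univ.filter (fun i => y i ∈ S))) := by
        constructor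
        · intro h; exact hT _ _ _ hx.2 (hT _ _ _ h hy.1)
        · intro h; exact hT _ _ _ hx.1 (hT _ _ _ h hy.2)
      have hfix : ∀ z : N → A, (Finset.filter (fun i => z i ∈ S) (Finset.univ : Finset N)).card
          = Nat.card {i : N // z i ∈ S} := by
        intro z
        rw [hcard S z]
        congr 1
        ext i
        simp [Finset.mem_filter]
      rw [key, std_cmp, hfix x, hfix y]
end

section
/- Let ≽ be a sufficientarian binary relation on A^N with sufficient set S, where (A, ≥) is a meet-semilattice. If ≽ additionally satisfies monotonicity and ≥-complements, then S is a filter: S is upward closed and closed under binary meets. -/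
open Function

/-- ≥-Complements: if lowering agent `i`'s consumption from `a` to `a ⊓ b` strictly
hurts society, then replacing `a` by `b` also strictly hurts society. -/
def ComplementsAx {N A : Type*} [SemilatticeInf A] (R : (N → A) → (N → A) → Prop) : Prop :=
  ∀ (i : N) (a b c : A),
    StrictRel R (alloc i a c) (alloc i (a ⊓ b) c) → StrictRel R (alloc i a c) (alloc i b c)

/-- a sufficientarian relation with sufficient set `S` on a meet-semilattice
satisfying monotonicity and ≥-complements has a sufficient set that is a filter. -/
theorem stmt4 {N A : Type*} [Fintype N] (hN : 2 ≤ Fintype.card N) [SemilatticeInf A]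
    (R : (N → A) → (N → A) → Prop) (S : Set A)
    (hrep : ∀ x y : N → A,
      R x y ↔ Nat.card {i : N // x i ∈ S} ≥ Nat.card {i : N // y i ∈ S})
    (hmono : ∀ x y : N → A, (∀ i, y i ≤ x i) → R x y)
    (hcomp : ComplementsAx R) :
    (∀ x ∈ S, ∀ y : A, x ≤ y → y ∈ S) ∧ (∀ x ∈ S, ∀ y ∈ S, x ⊓ y ∈ S) := by
  have hpos : 0 < Fintype.card N := lt_of_lt_of_le (by norm_num) hN
  obtain ⟨i⟩ := Fintype.card_pos_iff.mp hpos
  constructor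
  · intro x hx y hxy
    have h := hmono (fun _ => y) (fun _ => x) (fun _ => hxy)
    rw [hrep] at h
    by_contra hy
    have h1 : Nat.card {_i : N // y ∈ S} = 0 := by
      simp only [Nat.card_eq_zero]
      left
      exact ⟨fun ⟨_, hj⟩ => hy hj⟩
    have h2 : 0 < Nat.card {_i : N // x ∈ S} :=
      Nat.card_pos_iff.mpr ⟨⟨⟨i, hx⟩⟩, inferInstance⟩
    omega
  · intro x hx y hy
    by_contra hxy
    have hstrict : StrictRel R (alloc i x (x ⊓ y)) (alloc i (x ⊓ y) (x ⊓ y)) := by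
      have hc0 : Nat.card {j : N // alloc i (x ⊓ y) (x ⊓ y) j ∈ S} = 0 := by
        simp only [Nat.card_eq_zero]
        left
        refine ⟨fun ⟨j, hj⟩ => hxy ?_⟩
        simpa [alloc, Function.update_apply] using hj
      have hc1 : 0 < Nat.card {j : N // alloc i x (x ⊓ y) j ∈ S} := by
        refine Nat.card_pos_iff.mpr ⟨⟨⟨i, ?_⟩⟩, inferInstance⟩
        simpa [alloc] using hx
      constructor
      · rw [hrep]; omega
      · rw [hrep]; omega
    have h := hcomp i x y (x ⊓ y) hstrict
    apply h.2
    rw [hrep]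
    have hset : ∀ j, (alloc i y (x ⊓ y) j ∈ S ↔ alloc i x (x ⊓ y) j ∈ S) := by
      intro j
      by_cases hji : j = i
      · subst hji; simp [alloc, hx, hy]
      · simp [alloc, Function.update_apply, hji]
    have : Nat.card {j : N // alloc i y (x ⊓ y) j ∈ S}
        = Nat.card {j : N // alloc i x (x ⊓ y) j ∈ S} := by
      apply Nat.card_congr
      exact Equiv.subtypeEquivRight hset
    omega
end

section
/- Let ≽ on A² satisfy weak order, symmetry, separability, and weak sufficientarian judgment, and define a ≥* b iff (a,c) ≽ (b,c) for some c. Then for x, y ∈ A² with x₁ ≥* x₂, y₁ ≥* y₂, x₂ >* y₂, and y₁ >* x₁, we have x ≻ y. -/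
section Pairs

variable {A : Type*}

/-- Weak order on pairs: complete and transitive. -/
def WO2 (R : A × A → A × A → Prop) : Prop :=
  (∀ x y, R x y ∨ R y x) ∧ ∀ x y z, R x y → R y z → R x z

/-- Symmetry for two agents. -/
def SymmTwo (R : A × A → A × A → Prop) : Prop :=
  ∀ a b : A, R (a, b) (b, a)

/-- Separability for two agents: the comparison in one coordinate does not depend
on the common value of the other coordinate. -/
def Sep2 (R : A × A → A × A → Prop) : Prop :=
  (∀ a b c c' : A, R (a, c) (b, c) ↔ R (a, c') (b, c')) ∧
  (∀ a b c c' : A, R (c, a) (c, b) ↔ R (c', a) (c', b))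

/-- Strict part. -/
def Str2 (R : A × A → A × A → Prop) (x y : A × A) : Prop := R x y ∧ ¬ R y x

/-- Weak sufficientarian judgment for two agents (both coordinate versions). -/
def WSJ2 (R : A × A → A × A → Prop) : Prop :=
  (∀ a b c : A, Str2 R (b, b) (a, b) → Str2 R (b, b) (a, c)) ∧
  (∀ a b c : A, Str2 R (b, b) (b, a) → Str2 R (b, b) (c, a))

/-- The induced relation on `A`. -/
def GeS (R : A × A → A × A → Prop) (a b : A) : Prop := ∃ c : A, R (a, c) (b, c)

end Pairs

/-- under weak order, symmetry, separability and weak sufficientarian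
judgment on `A²`, if `x₁ ≥* x₂`, `y₁ ≥* y₂`, `x₂ >* y₂`, and `y₁ >* x₁`,
then `x ≻ y`. -/
theorem stmt14 {A : Type*} [Nonempty A] (R : A × A → A × A → Prop)
    (hwo : WO2 R) (hsym : SymmTwo R) (hsep : Sep2 R) (hwsj : WSJ2 R)
    (x y : A × A)
    (hx : GeS R x.1 x.2) (hy : GeS R y.1 y.2)
    (h2 : GeS R x.2 y.2 ∧ ¬ GeS R y.2 x.2)
    (h1 : GeS R y.1 x.1 ∧ ¬ GeS R x.1 y.1) :
    Str2 R x y := by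
  obtain ⟨hcomp, htrans⟩ := hwo
  obtain ⟨hsep1, hsep2⟩ := hsep
  obtain ⟨hwsj1, -⟩ := hwsj
  obtain ⟨c, hc⟩ := hx
  have hx' : R (x.1, x.2) (x.2, x.2) := (hsep1 x.1 x.2 c x.2).mp hc
  have hns : ¬ R (y.2, x.2) (x.2, x.2) := fun h => h2.2 ⟨x.2, h⟩
  have hstr : Str2 R (x.2, x.2) (y.2, x.2) :=
    ⟨(hcomp _ _).resolve_left hns, hns⟩
  have hstr2 := hwsj1 y.2 x.2 y.1 hstr
  have hRy : R (x.2, x.2) (y.1, y.2) := htrans _ _ _ hstr2.1 (hsym y.2 y.1)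
  have hnRy : ¬ R (y.1, y.2) (x.2, x.2) :=
    fun h => hstr2.2 (htrans _ _ _ (hsym y.2 y.1) h)
  constructor
  · have h := htrans _ _ _ hx' hRy
    simpa using h
  · intro h
    exact hnRy (htrans _ _ _ (show R (y.1, y.2) (x.1, x.2) by simpa using h) hx')
end

section
/- Let N = {1,2,3} and A = {a,b,c}. The weak order ≻ on A^N generated (via symmetry and transitivity) by (c,c,c) ≻ (b,c,c) ≻ (b,b,c) ≻ (a,c,c) ≻ (b,b,b) ≻ (a,b,c) ≻ (a,b,b) ≻ (a,a,b) ≻ (a,a,a) satisfies weak order, symmetry, separability, and weak sufficientarian judgment, but is not an endogenous leximin relation. -/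
open Function

section Leximin

variable {A : Type*} {n : ℕ}

/-- A weak order on `A`. -/
def WeakOrderOn (ge : A → A → Prop) : Prop :=
  (∀ a b, ge a b ∨ ge b a) ∧ ∀ a b c, ge a b → ge b c → ge a c

/-- Symmetric part of `ge`. -/
def EqvStar (ge : A → A → Prop) (a b : A) : Prop := ge a b ∧ ge b a

/-- Strict part of `ge`. -/
def StrictStar (ge : A → A → Prop) (a b : A) : Prop := ge a b ∧ ¬ ge b a

/-- `x` is arranged nondecreasingly with respect to `ge`. -/
def SortedGe (ge : A → A → Prop) (x : Fin n → A) : Prop :=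
  ∀ i j : Fin n, i ≤ j → ge (x j) (x i)

/-- Endogenous leximin with underlying weak order `ge`: nondecreasingly arranged
allocations are compared lexicographically from the bottom coordinate, and the
relation is invariant under permutations. -/
def EndoLeximin (R : (Fin n → A) → (Fin n → A) → Prop) (ge : A → A → Prop) : Prop :=
  WeakOrderOn ge ∧
  (∀ x y : Fin n → A, SortedGe ge x → SortedGe ge y →
    (R x y ↔ ((∀ i, EqvStar ge (x i) (y i)) ∨
      ∃ i : Fin n, (∀ j : Fin n, j < i → EqvStar ge (x j) (y j)) ∧
        StrictStar ge (x i) (y i)))) ∧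
  (∀ (σ : Equiv.Perm (Fin n)) (x : Fin n → A), R x (x ∘ σ) ∧ R (x ∘ σ) x)

end Leximin

/-- The utility levels realizing the example's ranking: with `a = 0`, `b = 1`, `c = 2`,
the additive rule with utilities `0, 5, 8` extends the chain
`ccc ≻ bcc ≻ bbc ≻ acc ≻ bbb ≻ abc ≻ abb ≻ aab ≻ aaa`. -/
noncomputable def exRank : Fin 3 → ℕ := ![0, 5, 8]

noncomputable def exRel (x y : Fin 3 → Fin 3) : Prop :=
  ∑ i, exRank (x i) ≥ ∑ i, exRank (y i)


lemma exRel_decide (x y : Fin 3 → Fin 3) :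
    exRel x y ↔ exRank (x 0) + exRank (x 1) + exRank (x 2) ≥
      exRank (y 0) + exRank (y 1) + exRank (y 2) := by
  unfold exRel
  rw [Fin.sum_univ_three, Fin.sum_univ_three]

lemma exRank_cases (x : Fin 3) : exRank x = 0 ∨ exRank x = 5 ∨ exRank x = 8 := by
  revert x; unfold exRank; decide

lemma sum_const (b : Fin 3) : (∑ k : Fin 3, exRank ((fun _ => b) k)) = 3 * exRank b := by
  rw [Fin.sum_univ_three]; ring

lemma sum_alloc (i : Fin 3) (a b : Fin 3) :
    ∑ k, exRank (alloc i a b k) = exRank a + 2 * exRank b := by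
  rw [Fin.sum_univ_three]
  fin_cases i <;> simp [alloc, Function.update_apply] <;> ring

lemma sum_alloc2 (i j : Fin 3) (hij : i ≠ j) (a c b : Fin 3) :
    ∑ k, exRank (alloc2 i j a c b k) = exRank a + exRank c + exRank b := by
  rw [Fin.sum_univ_three]
  fin_cases i <;> fin_cases j <;>
    simp_all [alloc, alloc2, Function.update_apply] <;> ring

lemma sorted3 (ge : Fin 3 → Fin 3 → Prop) (p q r : Fin 3)
    (h1 : ge q p) (h2 : ge r p) (h3 : ge r q)
    (h4 : ge p p) (h5 : ge q q) (h6 : ge r r) : SortedGe ge ![p,q,r] := by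
  intro i j hij
  fin_cases i <;> fin_cases j <;> simp_all

lemma key_strict (ge : Fin 3 → Fin 3 → Prop)
    (tot : ∀ a b, ge a b ∨ ge b a)
    (hlex : ∀ x y : Fin 3 → Fin 3, SortedGe ge x → SortedGe ge y →
      (exRel x y ↔ ((∀ i, EqvStar ge (x i) (y i)) ∨
        ∃ i : Fin 3, (∀ j : Fin 3, j < i → EqvStar ge (x j) (y j)) ∧
          StrictStar ge (x i) (y i))))
    (u v : Fin 3)
    (h1 : exRel ![u,u,u] ![v,u,u]) (h2 : ¬ exRel ![v,u,u] ![u,u,u])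
    (h3 : exRel ![u,u,u] ![u,u,v]) :
    StrictStar ge u v := by
  have rfl' : ∀ a, ge a a := fun a => (tot a a).elim id id
  have sx : SortedGe ge ![u,u,u] :=
    sorted3 ge u u u (rfl' u) (rfl' u) (rfl' u) (rfl' u) (rfl' u) (rfl' u)
  by_cases huv : ge u v
  · -- ![v,u,u] is sorted
    have sy : SortedGe ge ![v,u,u] :=
      sorted3 ge v u u huv huv (rfl' u) (rfl' v) (rfl' u) (rfl' u)
    have hR := (hlex ![u,u,u] ![v,u,u] sx sy).mp h1
    rcases hR with hall | ⟨i, hpre, hstr⟩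
    · exfalso
      apply h2
      refine (hlex ![v,u,u] ![u,u,u] sy sx).mpr (Or.inl ?_)
      intro i
      exact ⟨(hall i).2, (hall i).1⟩
    · fin_cases i
      · simpa using hstr
      · exfalso; have h : StrictStar ge u u := by simpa using hstr
        exact h.2 (rfl' u)
      · exfalso; have h : StrictStar ge u u := by simpa using hstr
        exact h.2 (rfl' u)
  · -- case ¬ ge u v : ![u,u,v] is sorted, derive a contradiction
    exfalso
    have hvu : ge v u := (tot u v).resolve_left huv
    have sy : SortedGe ge ![u,u,v] :=
      sorted3 ge u u v (rfl' u) hvu hvu (rfl' u) (rfl' u) (rfl' v)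
    have hR := (hlex ![u,u,u] ![u,u,v] sx sy).mp h3
    rcases hR with hall | ⟨i, hpre, hstr⟩
    · have h := (hall 2)
      simp [EqvStar] at h
      exact huv h.1
    · fin_cases i
      · have h : StrictStar ge u u := by simpa using hstr
        exact h.2 (rfl' u)
      · have h : StrictStar ge u u := by simpa using hstr
        exact h.2 (rfl' u)
      · have h : StrictStar ge u v := by simpa using hstr
        exact huv h.1

/-- the example weak order on `{a,b,c}³` extends the listed strict chain,
satisfies weak order, symmetry, separability, and weak sufficientarian judgment, but is
not an endogenous leximin relation. -/
theorem stmt15 :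
    (StrictRel exRel ![2,2,2] ![1,2,2] ∧ StrictRel exRel ![1,2,2] ![1,1,2] ∧
     StrictRel exRel ![1,1,2] ![0,2,2] ∧ StrictRel exRel ![0,2,2] ![1,1,1] ∧
     StrictRel exRel ![1,1,1] ![0,1,2] ∧ StrictRel exRel ![0,1,2] ![0,1,1] ∧
     StrictRel exRel ![0,1,1] ![0,0,1] ∧ StrictRel exRel ![0,0,1] ![0,0,0]) ∧
    WeakOrderRel exRel ∧ SymmetryAx exRel ∧ SeparabilityAx exRel ∧
    WeakSuffJudgment exRel ∧
    ¬ ∃ ge : Fin 3 → Fin 3 → Prop, EndoLeximin exRel ge := by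
  classical
  refine ⟨?_, ?_, ?_, ?_, ?_, ?_⟩
  · -- the chain
    refine ⟨?_, ?_, ?_, ?_, ?_, ?_, ?_, ?_⟩ <;>
      exact ⟨by unfold exRel exRank; decide, by unfold exRel exRank; decide⟩
  · -- weak order
    exact ⟨fun x y => le_total (∑ i, exRank (y i)) (∑ i, exRank (x i)),
      fun x y z h1 h2 => le_trans h2 h1⟩
  · -- symmetry
    intro σ x
    have h : ∑ i, exRank (x (σ i)) = ∑ i, exRank (x i) :=
      Equiv.sum_comp σ (fun i => exRank (x i))
    exact ⟨le_of_eq h, le_of_eq h.symm⟩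
  · -- separability
    intro M x y x' y'
    rw [exRel_decide, exRel_decide]
    by_cases h0 : (0 : Fin 3) ∈ M <;> by_cases h1 : (1 : Fin 3) ∈ M <;>
      by_cases h2 : (2 : Fin 3) ∈ M <;> simp [splice, h0, h1, h2] <;> omega
  · -- weak sufficientarian judgment
    intro a b c i j hij hstr
    obtain ⟨hs1, hs2⟩ := hstr
    unfold exRel at hs1 hs2
    rw [sum_alloc, sum_const] at hs1 hs2
    refine ⟨?_, ?_⟩
    · show exRel _ _
      unfold exRel
      rw [sum_alloc2 i j hij, sum_const]
      rcases exRank_cases a with ha | ha | ha <;>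
        rcases exRank_cases b with hb | hb | hb <;>
          rcases exRank_cases c with hc | hc | hc <;> omega
    · intro hcon
      unfold exRel at hcon
      rw [sum_alloc2 i j hij, sum_const] at hcon
      rcases exRank_cases a with ha | ha | ha <;>
        rcases exRank_cases b with hb | hb | hb <;>
          rcases exRank_cases c with hc | hc | hc <;> omega
  · -- not endogenous leximin
    rintro ⟨ge, ⟨tot, trans⟩, hlex, -⟩
    have rfl' : ∀ a, ge a a := fun a => (tot a a).elim id id
    have s21 : StrictStar ge 2 1 :=
      key_strict ge tot hlex 2 1 (by unfold exRel exRank; decide)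
        (by unfold exRel exRank; decide) (by unfold exRel exRank; decide)
    have s10 : StrictStar ge 1 0 :=
      key_strict ge tot hlex 1 0 (by unfold exRel exRank; decide)
        (by unfold exRel exRank; decide) (by unfold exRel exRank; decide)
    have ge20 : ge 2 0 := trans 2 1 0 s21.1 s10.1
    have sx : SortedGe ge ![1,1,1] :=
      sorted3 ge 1 1 1 (rfl' 1) (rfl' 1) (rfl' 1) (rfl' 1) (rfl' 1) (rfl' 1)
    have sy : SortedGe ge ![0,2,2] :=
      sorted3 ge 0 2 2 ge20 ge20 (rfl' 2) (rfl' 0) (rfl' 2) (rfl' 2)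
    have hR : exRel ![1,1,1] ![0,2,2] := by
      refine (hlex ![1,1,1] ![0,2,2] sx sy).mpr (Or.inr ⟨0, ?_, ?_⟩)
      · intro j hj; exact absurd hj (by simp)
      · simpa using s10
    revert hR
    unfold exRel exRank; decide
end

section
/- Let A be any set with at least 3 elements, u : A → ℝ a function whose image contains at least three distinct values, and |N| ≥ 2. The binary relation on A^N defined by x ≽ y iff Σ_i u(x_i) ≥ Σ_i u(y_i) is a weak order satisfying symmetry and separability but violates sufficientarian judgment. -/
open Function

lemma sum_update_aux {N A : Type*} [Fintype N] [DecidableEq N] (u : A → ℝ) (f : N → A)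
    (i : N) (a : A) :
    ∑ k, u (Function.update f i a k) = ∑ k, u (f k) + (u a - u (f i)) := by
  have h : ∀ k, u (Function.update f i a k)
      = u (f k) + (if k = i then u a - u (f i) else 0) := by
    intro k
    by_cases h : k = i <;> simp [h, Function.update_apply]
  rw [Finset.sum_congr rfl (fun k _ => h k), Finset.sum_add_distrib,
    Finset.sum_ite_eq' Finset.univ i (fun _ => u a - u (f i))]
  simp

/-- the additive (utilitarian) rule with a utility taking at least three
distinct values is a weak order satisfying symmetry and separability, but violates
sufficientarian judgment. -/
theorem stmt16 {N A : Type*} [Fintype N] (hN : 2 ≤ Fintype.card N)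
    (u : A → ℝ) (hu : ∃ a b c : A, u a ≠ u b ∧ u a ≠ u c ∧ u b ≠ u c) :
    let R : (N → A) → (N → A) → Prop := fun x y => ∑ i, u (x i) ≥ ∑ i, u (y i)
    WeakOrderRel R ∧ SymmetryAx R ∧ SeparabilityAx R ∧ ¬ SuffJudgment R := by
  classical
  intro R
  obtain ⟨a, b, c, habc⟩ : ∃ a b c : A, u a < u b ∧ u b < u c := by
    obtain ⟨a, b, c, hab, hac, hbc⟩ := hu
    rcases hab.lt_or_gt with h1 | h1
    · rcases hbc.lt_or_gt with h2 | h2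
      · exact ⟨a, b, c, h1, h2⟩
      · rcases hac.lt_or_gt with h3 | h3
        · exact ⟨a, c, b, h3, h2⟩
        · exact ⟨c, a, b, h3, h1⟩
    · rcases hbc.lt_or_gt with h2 | h2
      · rcases hac.lt_or_gt with h3 | h3
        · exact ⟨b, a, c, h1, h3⟩
        · exact ⟨b, c, a, h2, h3⟩
      · exact ⟨c, b, a, h2, h1⟩
  refine ⟨⟨fun x y => le_total _ _, fun x y z h1 h2 => le_trans h2 h1⟩, ?_, ?_, ?_⟩
  · intro σ x
    have : ∑ k, u ((x ∘ σ) k) = ∑ k, u (x k) := Equiv.sum_comp σ (fun k => u (x k))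
    have h := this
    simp only [Function.comp] at h
    exact ⟨h.le, h.ge⟩
  · intro M x y x' y'
    have key : ∀ z : N → A,
        (∑ k, u (splice M x z k) ≥ ∑ k, u (splice M x' z k) ↔
          ∑ k ∈ Finset.univ.filter (· ∈ M), u (x k)
            ≥ ∑ k ∈ Finset.univ.filter (· ∈ M), u (x' k)) := by
      intro z
      have hs : ∀ w : N → A, ∑ k, u (splice M w z k)
          = ∑ k ∈ Finset.univ.filter (· ∈ M), u (w k)
            + ∑ k ∈ Finset.univ.filter (fun k => ¬ k ∈ M), u (z k) := by
        intro w
        rw [show (fun k => u (splice M w z k))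
            = fun k => if k ∈ M then u (w k) else u (z k) from ?_, Finset.sum_ite]
        funext k
        by_cases h : k ∈ M <;> simp [splice, h]
      rw [hs x, hs x']
      exact ⟨fun h => by linarith, fun h => by linarith⟩
    exact (key y).trans (key y').symm
  · intro hS
    have hNt : Nontrivial N := Fintype.one_lt_card_iff_nontrivial.mp (lt_of_lt_of_le one_lt_two hN)
    obtain ⟨i, j, hij⟩ := exists_pair_ne N
    have h1 : ∑ k, u (alloc i a b k) = ∑ _k : N, u b + (u a - u b) := by
      simpa [alloc] using sum_update_aux u (fun _ => b) i a
    have h2 : ∑ k, u (alloc2 i j a c b k) = ∑ k, u (alloc i a b k) + (u c - u b) := by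
      have := sum_update_aux u (alloc i a b) j c
      rwa [show alloc i a b j = b from Function.update_of_ne (Ne.symm hij) _ _] at this
    have hstrict : StrictRel R (fun _ => b) (alloc i a b) := by
      constructor
      · show ∑ k, u (alloc i a b k) ≤ ∑ _k : N, u b
        rw [h1]; linarith [habc.1]
      · show ¬ (∑ _k : N, u b ≤ ∑ k, u (alloc i a b k))
        rw [h1]; intro h; linarith [habc.1]
    have := hS a b c i j hij hstrict
    have : ∑ k, u (alloc2 i j a c b k) ≤ ∑ k, u (alloc i a b k) := this
    rw [h2] at this
    linarith [habc.2]
end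

section
/- Let A = [0,1] and N finite with |N| ≥ 2. The binary relation x ≽ y iff min_i x_i ≥ min_i y_i is a weak order satisfying symmetry, monotonicity, and sufficientarian judgment, but it violates separability (when |N| ≥ 2). -/
open Function

lemma alloc_self {N A : Type*} (i : N) (a b : A) : alloc i a b i = a := by
  simp [alloc, Function.update]

lemma alloc_ne {N A : Type*} {i k : N} (h : k ≠ i) (a b : A) : alloc i a b k = b := by
  simp [alloc, Function.update, h]

lemma alloc2_fst {N A : Type*} {i j : N} (h : i ≠ j) (a c b : A) :
    alloc2 i j a c b i = a := by
  simp [alloc2, Function.update, h, alloc_self]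

/-- on `A = [0,1]`, the maximin rule `x ≽ y ↔ min_i x_i ≥ min_i y_i` is a
weak order satisfying symmetry, monotonicity, and sufficientarian judgment, but violates
separability. -/
theorem stmt17 {N : Type*} [Fintype N] [Nontrivial N] :
    let A := Set.Icc (0 : ℝ) 1
    let R : (N → A) → (N → A) → Prop := fun x y =>
      Finset.univ.inf' Finset.univ_nonempty y ≤ Finset.univ.inf' Finset.univ_nonempty x
    WeakOrderRel R ∧ SymmetryAx R ∧ (∀ x y : N → A, (∀ i, y i ≤ x i) → R x y) ∧
      SuffJudgment R ∧ ¬ SeparabilityAx R := by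

  intro A R
  have hinfperm : ∀ (σ : Equiv.Perm N) (x : N → A),
      Finset.univ.inf' Finset.univ_nonempty (x ∘ σ) =
        Finset.univ.inf' Finset.univ_nonempty x := by
    intro σ x
    apply le_antisymm
    · apply Finset.le_inf'
      intro i _
      exact Finset.inf'_le_of_le _ (Finset.mem_univ (σ.symm i))
        (le_of_eq (by simp))
    · apply Finset.le_inf'
      intro i _
      exact Finset.inf'_le_of_le _ (Finset.mem_univ (σ i)) (le_of_eq rfl)
  refine ⟨⟨fun x y => le_total _ _, fun x y z hxy hyz => le_trans hyz hxy⟩,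
    fun σ x => ⟨le_of_eq (hinfperm σ x), le_of_eq (hinfperm σ x).symm⟩,
    fun x y h => Finset.le_inf' _ _ (fun i _ => Finset.inf'_le_of_le _ (Finset.mem_univ i) (h i)), ?_, ?_⟩
  · -- SuffJudgment
    intro a b c i j hij ⟨h1, h2⟩
    simp only [R, Finset.inf'_const] at h1 h2
    have hab : a ≤ b := by
      by_contra hba
      exact h2 (Finset.le_inf' _ _ (fun k _ => by
        by_cases hk : k = i
        · subst hk; rw [alloc_self]; exact le_of_not_ge hba
        · rw [alloc_ne hk]))
    have h3 : a ≤ Finset.univ.inf' Finset.univ_nonempty (alloc i a b) := by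
      apply Finset.le_inf'
      intro k _
      by_cases hk : k = i
      · subst hk; rw [alloc_self]
      · rw [alloc_ne hk]; exact hab
    have h4 : Finset.univ.inf' Finset.univ_nonempty (alloc2 i j a c b) ≤ a := by
      apply Finset.inf'_le_of_le _ (Finset.mem_univ i)
      rw [alloc2_fst hij]
    exact le_trans h4 h3
  · -- ¬ Separability
    intro hsep
    set z : A := ⟨0, le_refl 0, by norm_num⟩ with hz
    set o : A := ⟨1, by norm_num, le_refl 1⟩ with ho
    obtain ⟨i, k, hik⟩ := exists_pair_ne N
    have h := hsep {i} (fun _ => z) (fun _ => o) (fun _ => o) (fun _ => z)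
    have hRHS : R (splice {i} (fun _ => z) (fun _ => z))
        (splice {i} (fun _ => o) (fun _ => z)) := by
      show Finset.univ.inf' _ _ ≤ Finset.univ.inf' _ _
      calc Finset.univ.inf' Finset.univ_nonempty (splice {i} (fun _ => o) (fun _ => z))
          ≤ splice {i} (fun _ => o) (fun _ => z) k :=
            Finset.inf'_le _ (Finset.mem_univ k)
        _ = z := by simp [splice, Set.mem_singleton_iff, hik.symm]
        _ ≤ _ := Finset.le_inf' _ _ (fun m _ => by simp [splice])
    have hLHS := h.mpr hRHS
    have h5 : (o : A) ≤ z := by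
      calc o = Finset.univ.inf' Finset.univ_nonempty
            (splice {i} (fun _ => o) (fun _ => o)) := by
            have hs : splice {i} (fun _ => o) (fun _ => o) = (fun _ => o) :=
              funext fun m => by unfold splice; exact ite_self _
            rw [hs, Finset.inf'_const]
        _ ≤ Finset.univ.inf' Finset.univ_nonempty
            (splice {i} (fun _ => z) (fun _ => o)) := hLHS
        _ ≤ splice {i} (fun _ => z) (fun _ => o) i :=
            Finset.inf'_le _ (Finset.mem_univ i)
        _ = z := by simp [splice]
    have : (1:ℝ) ≤ 0 := h5
    linarith
end

section
/- Let ≽ be a weak order on A^N satisfying separability and symmetry, and define a ≥* b iff a_i c ≽ b_i c for some i ∈ N and c ∈ A. Then ≥* is well-defined (independent of the choice of i and c) and is a weak order on A; moreover, if x_i ≥* y_i for all i ∈ N then x ≽ y, and if additionally x_i >* y_i for some i then x ≻ y. -/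
open Function

section AuxLemmas
variable {N A : Type*}

lemma splice_singleton [DecidableEq N] (i : N) (x w : N → A) :
    splice {i} x w = Function.update w i (x i) := by
  funext j
  by_cases h : j = i <;> simp [splice, Function.update, h]

lemma alloc_eq_update [DecidableEq N] (i : N) (a c : A) :
    alloc i a c = Function.update (fun _ => c) i a := by
  funext j
  by_cases h : j = i <;> simp [alloc, Function.update, h]

lemma sep_update [DecidableEq N] {R : (N → A) → (N → A) → Prop}
    (hsep : SeparabilityAx R) (i : N) (a b : A) (w w' : N → A) :
    R (Function.update w i a) (Function.update w i b) ↔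
    R (Function.update w' i a) (Function.update w' i b) := by
  have h := hsep {i} (fun _ => a) w (fun _ => b) w'
  simp only [splice_singleton] at h; exact h

lemma step_iff [DecidableEq N] {R : (N → A) → (N → A) → Prop}
    (hsep : SeparabilityAx R) (i : N) (a b c : A) (w : N → A) :
    R (Function.update w i a) (Function.update w i b) ↔ R (alloc i a c) (alloc i b c) := by
  rw [alloc_eq_update, alloc_eq_update]
  exact sep_update hsep i a b w _

lemma swap_alloc [DecidableEq N] (j j' : N) (u v : A) :
    alloc j' u v ∘ (Equiv.swap j j') = alloc j u v := by
  funext k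
  by_cases h : k = j
  · subst h; simp [alloc, Function.update, Equiv.swap_apply_left]
  · by_cases h' : k = j'
    · subst h'
      have hjj : j ≠ k := fun e => h e.symm
      simp [alloc, Function.update, Equiv.swap_apply_right, hjj, h]
    · simp [alloc, Function.update, Equiv.swap_apply_of_ne_of_ne h h', h, h']

lemma indep_lemma {R : (N → A) → (N → A) → Prop}
    (hwo : WeakOrderRel R) (hsym : SymmetryAx R) (hsep : SeparabilityAx R)
    (a b : A) (i i' : N) (c c' : A) :
    R (alloc i a c) (alloc i b c) ↔ R (alloc i' a c') (alloc i' b c') := by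
  classical
  have keyI : ∀ (j j' : N) (u v d : A),
      R (alloc j u d) (alloc j v d) → R (alloc j' u d) (alloc j' v d) := by
    intro j j' u v d h
    have h1 := (hsym (Equiv.swap j j') (alloc j' u d)).1
    rw [swap_alloc] at h1
    have h2 := (hsym (Equiv.swap j j') (alloc j' v d)).2
    rw [swap_alloc] at h2
    exact hwo.2 _ _ _ (hwo.2 _ _ _ h1 h) h2
  have keyC : ∀ (j : N) (d d' u v : A),
      R (alloc j u d) (alloc j v d) ↔ R (alloc j u d') (alloc j v d') := by
    intro j d d' u v
    rw [alloc_eq_update, alloc_eq_update, alloc_eq_update, alloc_eq_update]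
    exact sep_update hsep j u v _ _
  constructor
  · intro h
    exact (keyC i' c c' a b).1 (keyI i i' a b c h)
  · intro h
    exact (keyC i c' c a b).1 (keyI i' i a b c' h)

lemma mono_lemma [Fintype N] {R : (N → A) → (N → A) → Prop}
    (hwo : WeakOrderRel R) (hsym : SymmetryAx R) (hsep : SeparabilityAx R)
    (x y : N → A)
    (h : ∀ i, ∃ (j : N) (c : A), R (alloc j (x i) c) (alloc j (y i) c)) :
    R x y := by
  classical
  have rfl' : ∀ z : N → A, R z z := fun z => (hwo.1 z z).elim id id
  have key : ∀ s : Finset N, R (fun i => if i ∈ s then x i else y i) y := by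
    intro s
    induction s using Finset.induction_on with
    | empty => simpa using rfl' y
    | @insert j s hj ih =>
      set f : N → A := fun i => if i ∈ s then x i else y i with hf
      have h1 : (fun i => if i ∈ insert j s then x i else y i)
          = Function.update f j (x j) := by
        funext k
        by_cases hk : k = j <;> simp [Function.update, hk, hf, Finset.mem_insert]
      have h2 : f = Function.update f j (y j) := by
        funext k
        by_cases hk : k = j <;> simp [Function.update, hk, hf, hj]
      obtain ⟨j', c, hc⟩ := h j
      have hjc : R (alloc j (x j) c) (alloc j (y j) c) :=
        (indep_lemma hwo hsym hsep (x j) (y j) j' j c c).1 hc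
      have hstep : R (Function.update f j (x j)) (Function.update f j (y j)) :=
        (step_iff hsep j (x j) (y j) c f).2 hjc
      rw [← h2] at hstep
      rw [h1]
      exact hwo.2 _ _ _ hstep ih
  simpa using key Finset.univ

end AuxLemmas

/-- under weak order, separability and symmetry, the induced relation
`a ≥* b iff a_i c ≽ b_i c for some i, c` is independent of the choice of `i` and `c`,
is a weak order on `A`, and the relation `≽` is monotone (strictly so) with respect
to it. -/
theorem stmt19 {N A : Type*} [Fintype N] (hN : 2 ≤ Fintype.card N) [Nonempty A]
    (R : (N → A) → (N → A) → Prop)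
    (hwo : WeakOrderRel R) (hsym : SymmetryAx R) (hsep : SeparabilityAx R) :
    let ge : A → A → Prop := fun a b => ∃ (i : N) (c : A), R (alloc i a c) (alloc i b c)
    (∀ (a b : A) (i i' : N) (c c' : A),
        R (alloc i a c) (alloc i b c) ↔ R (alloc i' a c') (alloc i' b c')) ∧
    (∀ a b : A, ge a b ∨ ge b a) ∧
    (∀ a b c : A, ge a b → ge b c → ge a c) ∧
    (∀ x y : N → A, (∀ i, ge (x i) (y i)) → R x y) ∧
    (∀ x y : N → A, (∀ i, ge (x i) (y i)) → (∃ i, ge (x i) (y i) ∧ ¬ ge (y i) (x i)) →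
      StrictRel R x y) := by
  classical
  intro ge
  have hNpos : 0 < Fintype.card N := by omega
  obtain ⟨i0⟩ : Nonempty N := Fintype.card_pos_iff.mp hNpos
  obtain ⟨c0⟩ := ‹Nonempty A›
  have indep' : ∀ (a b : A) (i i' : N) (c c' : A),
      R (alloc i a c) (alloc i b c) ↔ R (alloc i' a c') (alloc i' b c') :=
    fun a b i i' c c' => indep_lemma hwo hsym hsep a b i i' c c'
  have rfl' : ∀ z : N → A, R z z := fun z => (hwo.1 z z).elim id id
  refine ⟨indep', ?_, ?_, ?_, ?_⟩
  · intro a b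
    rcases hwo.1 (alloc i0 a c0) (alloc i0 b c0) with h | h
    · exact Or.inl ⟨i0, c0, h⟩
    · exact Or.inr ⟨i0, c0, h⟩
  · rintro a b c ⟨i, d, hab⟩ ⟨j, e, hbc⟩
    exact ⟨i0, c0, hwo.2 _ _ _ ((indep' a b i i0 d c0).1 hab) ((indep' b c j i0 e c0).1 hbc)⟩
  · intro x y h
    exact mono_lemma hwo hsym hsep x y h
  · rintro x y h ⟨i, hi, hni⟩
    refine ⟨mono_lemma hwo hsym hsep x y h, ?_⟩
    intro hyx
    set z := Function.update x i (y i) with hz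
    have hzy : R z y := by
      apply mono_lemma hwo hsym hsep
      intro k
      by_cases hk : k = i
      · have : z k = y k := by subst hk; simp [hz]
        rw [this]
        exact ⟨i0, c0, rfl' _⟩
      · have : z k = x k := by simp [hz, hk]
        rw [this]
        exact h k
    have hzx : R z x := hwo.2 _ _ _ hzy hyx
    have hzx' : R (Function.update x i (y i)) (Function.update x i (x i)) := by
      rw [Function.update_eq_self]
      exact hzx
    exact hni ⟨i, c0, (step_iff hsep i (y i) (x i) c0 x).1 hzx'⟩
end
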